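/- Let Y, Y₁, Y₂, ... be i.i.d. real random variables with mean μ, bounded in absolute value by M > 0, and let N_n be a Poisson random variable with mean n, independent of the Y_i. Then for any v ≥ 2(30e)² E[Y²], with d = 30eM, for all λ > 0: P{Σ_{i=1}^{N_n} Y_i − nμ ≥ λ} ≤ exp(−λ²/(2(nv + dλ))). -/

import Mathlib

open MeasureTheory ProbabilityTheory
open scoped NNReal

set_option maxHeartbeats 2000000 in
theorem compound_poisson_bernstein
    {Ω : Type*} [MeasurableSpace Ω] (μ : Measure Ω) [IsProbabilityMeasure μ]
    (Y : ℕ → Ω → ℝ) (hYmeas : ∀ i, Measurable (Y i))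
    (hiid : iIndepFun Y μ)
    (hident : ∀ i, μ.map (Y i) = μ.map (Y 0))
    (M : ℝ) (hM : 0 < M) (hbd : ∀ i, ∀ᵐ ω ∂μ, |Y i ω| ≤ M)
    (m : ℝ) (hmean : ∫ ω, Y 0 ω ∂μ = m)
    (N : Ω → ℕ) (hNmeas : Measurable N) (n : ℕ)
    (hN : μ.map N = (ProbabilityTheory.poissonPMF (n : ℝ≥0)).toMeasure)
    (hindep : IndepFun N (fun ω i => Y i ω) μ)
    (v : ℝ) (hv : 2 * (Real.exp 1 * 30) ^ 2 * ∫ ω, (Y 0 ω) ^ 2 ∂μ ≤ v)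
    (D : ℝ) (hD : D = Real.exp 1 * 30 * M)
    (lam : ℝ) (hlam : 0 < lam) :
    μ {ω | (∑ i ∈ Finset.range (N ω), Y i ω) - n * m ≥ lam}
      ≤ ENNReal.ofReal (Real.exp (-(lam ^ 2 / 2) / (n * v + D * lam))) := by
  classical
  obtain ⟨b, hbdef⟩ : ∃ b : ℝ, b = ∫ ω, (Y 0 ω) ^ 2 ∂μ := ⟨_, rfl⟩
  rw [← hbdef] at hv
  have hb0 : 0 ≤ b := by
    rw [hbdef]; exact integral_nonneg fun ω => sq_nonneg _
  have he1 : (1 : ℝ) ≤ Real.exp 1 := by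
    have := Real.add_one_le_exp (1 : ℝ); linarith
  have hv0 : 0 ≤ v := le_trans (by nlinarith) hv
  have hD0 : 0 < D := by rw [hD]; positivity
  obtain ⟨K, hKdef⟩ : ∃ K : ℝ, K = n * v + D * lam := ⟨_, rfl⟩
  have hK0 : 0 < K := by
    have h1 : (0:ℝ) ≤ (n : ℝ) * v := mul_nonneg (Nat.cast_nonneg n) hv0
    have h2 : 0 < D * lam := mul_pos hD0 hlam
    rw [hKdef]; linarith
  obtain ⟨t, htdef⟩ : ∃ t : ℝ, t = lam / K := ⟨_, rfl⟩
  have ht0 : 0 < t := htdef ▸ div_pos hlam hK0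
  have htK : t * K = lam := by rw [htdef]; exact div_mul_cancel₀ _ hK0.ne'
  have htD : t * D ≤ 1 := by
    rw [htdef, div_mul_eq_mul_div, div_le_one hK0]
    nlinarith [mul_nonneg (Nat.cast_nonneg n) hv0]
  have htM : t * M ≤ 1 := by
    have : t * D = t * M * (Real.exp 1 * 30) := by rw [hD]; ring
    nlinarith [mul_pos ht0 hM]
  -- integrability of bounded random variables
  have hYint : ∀ i, Integrable (Y i) μ := by
    intro i
    refine ⟨(hYmeas i).aestronglyMeasurable, HasFiniteIntegral.of_bounded (C := M) ?_⟩
    filter_upwards [hbd i] with ω hω using by simpa using hω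
  have hY2int : Integrable (fun ω => (Y 0 ω) ^ 2) μ := by
    refine ⟨((hYmeas 0).pow_const 2).aestronglyMeasurable,
      HasFiniteIntegral.of_bounded (C := M ^ 2) ?_⟩
    filter_upwards [hbd 0] with ω hω
    have : |Y 0 ω| ^ 2 ≤ M ^ 2 := by
      exact pow_le_pow_left₀ (abs_nonneg _) hω 2
    simpa [abs_pow, sq_abs] using this
  have hexpint : ∀ i, Integrable (fun ω => Real.exp (t * Y i ω)) μ := by
    intro i
    refine ⟨(((hYmeas i).const_mul t).exp).aestronglyMeasurable,
      HasFiniteIntegral.of_bounded (C := Real.exp (t * M)) ?_⟩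
    filter_upwards [hbd i] with ω hω
    rw [Real.norm_eq_abs, abs_of_pos (Real.exp_pos _), Real.exp_le_exp]
    have : Y i ω ≤ M := (abs_le.mp hω).2
    nlinarith
  have hsumint : ∀ k : ℕ,
      Integrable (fun ω => Real.exp (t * ∑ i ∈ Finset.range k, Y i ω)) μ := by
    intro k
    have := hiid.integrable_exp_mul_sum hYmeas (s := Finset.range k)
      (fun i _ => hexpint i)
    simpa using this
  -- the mgf of Y 0 at t
  obtain ⟨φ, hφdef⟩ : ∃ p : ℝ, p = mgf (Y 0) μ t := ⟨_, rfl⟩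
  have hφ0 : 0 ≤ φ := hφdef ▸ mgf_nonneg
  have hφi : ∀ i, mgf (Y i) μ t = φ := by
    intro i
    have hmeas : Measurable fun x : ℝ => Real.exp (t * x) :=
      (measurable_const_mul t).exp
    rw [hφdef, mgf, mgf,
      ← integral_map (hYmeas i).aemeasurable hmeas.aestronglyMeasurable,
      ← integral_map (hYmeas 0).aemeasurable hmeas.aestronglyMeasurable,
      hident i]
  have hφk : ∀ k : ℕ,
      ∫ ω, Real.exp (t * ∑ i ∈ Finset.range k, Y i ω) ∂μ = φ ^ k := by
    intro k
    have h := hiid.mgf_sum hYmeas (Finset.range k) (t := t)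
    have h2 : mgf (∑ i ∈ Finset.range k, Y i) μ t
        = ∫ ω, Real.exp (t * ∑ i ∈ Finset.range k, Y i ω) ∂μ := by
      rw [mgf]; congr 1; funext ω; simp [Finset.sum_apply]
    rw [h2] at h
    rw [h, Finset.prod_congr rfl (fun i _ => hφi i), Finset.prod_const,
      Finset.card_range]
  -- upper bound for φ
  have hφub : φ ≤ 1 + t * m + t ^ 2 * b := by
    have hae : ∀ᵐ ω ∂μ,
        Real.exp (t * Y 0 ω) ≤ 1 + t * Y 0 ω + t ^ 2 * (Y 0 ω) ^ 2 := by
      filter_upwards [hbd 0] with ω hω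
      have h1 : |t * Y 0 ω| ≤ 1 := by
        rw [abs_mul, abs_of_pos ht0]
        nlinarith
      have h2 := Real.abs_exp_sub_one_sub_id_le h1
      have h3 : (t * Y 0 ω) ^ 2 = t ^ 2 * (Y 0 ω) ^ 2 := by ring
      have h4 := (abs_le.mp h2).2
      nlinarith
    have hR : Integrable (fun ω => 1 + t * Y 0 ω + t ^ 2 * (Y 0 ω) ^ 2) μ :=
      ((integrable_const 1).add ((hYint 0).const_mul t)).add
        (hY2int.const_mul (t ^ 2))
    have hI1 : Integrable (fun ω => 1 + t * Y 0 ω) μ :=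
      (integrable_const 1).add ((hYint 0).const_mul t)
    have := integral_mono_ae (hexpint 0) hR hae
    rw [hφdef, mgf]
    refine le_trans this (le_of_eq ?_)
    rw [integral_add hI1 (hY2int.const_mul (t ^ 2)),
      integral_add (integrable_const 1) ((hYint 0).const_mul t),
      integral_const, integral_const_mul, integral_const_mul, hmean, ← hbdef]
    simp
  -- the compound sum
  obtain ⟨S, hSdef⟩ : ∃ S : Ω → ℝ, S = fun ω => ∑ i ∈ Finset.range (N ω), Y i ω :=
    ⟨_, rfl⟩
  have hSmeas : Measurable S := by
    have h1 : Measurable (fun p : (ℕ → ℝ) × ℕ => ∑ i ∈ Finset.range p.2, p.1 i) :=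
      measurable_from_prod_countable_left fun k =>
        Finset.measurable_sum (Finset.range k) (fun i _ => measurable_pi_apply i)
    rw [hSdef]
    exact h1.comp ((measurable_pi_lambda _ hYmeas).prodMk hNmeas)
  -- main mgf identity for the compound sum
  have hgmeas : ∀ k : ℕ, Measurable fun ω : Ω =>
      ENNReal.ofReal (Real.exp (t * ∑ i ∈ Finset.range k, Y i ω)) := fun k =>
    (((Finset.measurable_sum _ fun i _ => hYmeas i).const_mul t).exp).ennreal_ofReal
  have hA : ∫⁻ ω, ENNReal.ofReal (Real.exp (t * S ω)) ∂μ
      = ENNReal.ofReal (Real.exp ((n : ℝ) * (φ - 1))) := by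
    have hstep1 : ∀ ω, ENNReal.ofReal (Real.exp (t * S ω))
        = ∑' k : ℕ, Set.indicator (N ⁻¹' {k})
            (fun ω'' => ENNReal.ofReal
              (Real.exp (t * ∑ i ∈ Finset.range k, Y i ω''))) ω := by
      intro ω
      rw [tsum_eq_single (N ω) ?_]
      · rw [Set.indicator_of_mem (by simp : ω ∈ N ⁻¹' {N ω}), hSdef]
      · intro k hk
        exact Set.indicator_of_notMem (by simpa using (Ne.symm hk)) _
    have hterm : ∀ k : ℕ, ∫⁻ ω, Set.indicator (N ⁻¹' {k})
          (fun ω'' => ENNReal.ofReal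
            (Real.exp (t * ∑ i ∈ Finset.range k, Y i ω''))) ω ∂μ
        = ENNReal.ofReal (Real.exp (-(n : ℝ)) * (n : ℝ) ^ k / k.factorial)
            * ENNReal.ofReal (φ ^ k) := by
      intro k
      have hind : ∀ ω, Set.indicator (N ⁻¹' {k})
            (fun ω'' => ENNReal.ofReal
              (Real.exp (t * ∑ i ∈ Finset.range k, Y i ω''))) ω
          = (((fun j : ℕ => if j = k then (1 : ENNReal) else 0) ∘ N) ω)
            * (((fun y : ℕ → ℝ => ENNReal.ofReal
                (Real.exp (t * ∑ i ∈ Finset.range k, y i)))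
                ∘ (fun ω i => Y i ω)) ω) := by
        intro ω
        by_cases h : N ω = k <;>
          simp [Set.indicator, h, Function.comp]
      have hmf : Measurable fun j : ℕ => if j = k then (1 : ENNReal) else 0 :=
        measurable_of_countable _
      have hmg : Measurable fun y : ℕ → ℝ =>
          ENNReal.ofReal (Real.exp (t * ∑ i ∈ Finset.range k, y i)) :=
        (((Finset.measurable_sum _ fun i _ => measurable_pi_apply i).const_mul
          t).exp).ennreal_ofReal
      have hindk := hindep.comp hmf hmg
      have hmul := lintegral_mul_eq_lintegral_mul_lintegral_of_indepFun
        (hmf.comp hNmeas) (hmg.comp (measurable_pi_lambda _ hYmeas)) hindk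
      simp only [Pi.mul_apply] at hmul
      rw [lintegral_congr hind, hmul]
      have hleft : ∫⁻ ω, ((fun j : ℕ => if j = k then (1 : ENNReal) else 0) ∘ N) ω ∂μ
          = ENNReal.ofReal (Real.exp (-(n : ℝ)) * (n : ℝ) ^ k / k.factorial) := by
        have h1 : ∀ ω, ((fun j : ℕ => if j = k then (1 : ENNReal) else 0) ∘ N) ω
            = Set.indicator (N ⁻¹' {k}) (1 : Ω → ENNReal) ω := by
          intro ω
          by_cases h : N ω = k <;> simp [Set.indicator, h, Function.comp]
        rw [lintegral_congr h1,
          lintegral_indicator_one (hNmeas (measurableSet_singleton k)),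
          ← Measure.map_apply hNmeas (measurableSet_singleton k), hN,
          PMF.toMeasure_apply_singleton _ _ (measurableSet_singleton k)]
        have hpmf : (poissonPMF (n : ℝ≥0)) k
            = ENNReal.ofReal (poissonPMFReal (n : ℝ≥0) k) := rfl
        rw [hpmf, poissonPMFReal]
        congr 2
      have hright : ∫⁻ ω, ((fun y : ℕ → ℝ => ENNReal.ofReal
            (Real.exp (t * ∑ i ∈ Finset.range k, y i)))
            ∘ (fun ω i => Y i ω)) ω ∂μ = ENNReal.ofReal (φ ^ k) := by
        have h2 : ∀ ω, ((fun y : ℕ → ℝ => ENNReal.ofReal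
              (Real.exp (t * ∑ i ∈ Finset.range k, y i)))
              ∘ (fun ω i => Y i ω)) ω
            = ENNReal.ofReal (Real.exp (t * ∑ i ∈ Finset.range k, Y i ω)) := by
          intro ω; rfl
        rw [lintegral_congr h2,
          ← ofReal_integral_eq_lintegral_ofReal (hsumint k)
            (Filter.Eventually.of_forall fun ω => (Real.exp_pos _).le),
          hφk k]
      rw [hleft, hright]
    calc ∫⁻ ω, ENNReal.ofReal (Real.exp (t * S ω)) ∂μ
        = ∫⁻ ω, ∑' k : ℕ, Set.indicator (N ⁻¹' {k})
            (fun ω'' => ENNReal.ofReal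
              (Real.exp (t * ∑ i ∈ Finset.range k, Y i ω''))) ω ∂μ :=
          lintegral_congr hstep1
      _ = ∑' k : ℕ, ∫⁻ ω, Set.indicator (N ⁻¹' {k})
            (fun ω'' => ENNReal.ofReal
              (Real.exp (t * ∑ i ∈ Finset.range k, Y i ω''))) ω ∂μ :=
          lintegral_tsum fun k =>
            ((hgmeas k).indicator (hNmeas (measurableSet_singleton k))).aemeasurable
      _ = ∑' k : ℕ, ENNReal.ofReal
            (Real.exp (-(n : ℝ)) * (((n : ℝ) * φ) ^ k / k.factorial)) := by
          refine tsum_congr fun k => ?_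
          rw [hterm k, ← ENNReal.ofReal_mul
            (by positivity)]
          congr 1
          rw [mul_pow]
          ring
      _ = ENNReal.ofReal (∑' k : ℕ,
            Real.exp (-(n : ℝ)) * (((n : ℝ) * φ) ^ k / k.factorial)) := by
          rw [ENNReal.ofReal_tsum_of_nonneg]
          · intro k
            have : (0 : ℝ) ≤ ((n : ℝ) * φ) ^ k :=
              pow_nonneg (mul_nonneg (Nat.cast_nonneg n) hφ0) k
            positivity
          · exact (Real.summable_pow_div_factorial ((n : ℝ) * φ)).mul_left _
      _ = ENNReal.ofReal (Real.exp ((n : ℝ) * (φ - 1))) := by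
          congr 1
          rw [tsum_mul_left]
          have hexp : ∑' k : ℕ, ((n : ℝ) * φ) ^ k / k.factorial
              = Real.exp ((n : ℝ) * φ) := by
            rw [Real.exp_eq_exp_ℝ, NormedSpace.exp_eq_tsum_div]
          rw [hexp, ← Real.exp_add]
          congr 1
          ring
  -- Chernoff bound
  have hchern : μ {ω | S ω - n * m ≥ lam}
      ≤ ENNReal.ofReal (Real.exp ((n : ℝ) * (φ - 1) - t * (lam + n * m))) := by
    have hfmeas : Measurable fun ω => ENNReal.ofReal (Real.exp (t * S ω)) :=
      ((hSmeas.const_mul t).exp).ennreal_ofReal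
    have he0 : ENNReal.ofReal (Real.exp (t * (lam + n * m))) ≠ 0 :=
      (ENNReal.ofReal_pos.mpr (Real.exp_pos _)).ne'
    have hetop : ENNReal.ofReal (Real.exp (t * (lam + n * m))) ≠ ⊤ :=
      ENNReal.ofReal_ne_top
    rw [← ENNReal.mul_le_mul_iff_right he0 hetop]
    have hsub : {ω | S ω - n * m ≥ lam}
        ⊆ {ω | ENNReal.ofReal (Real.exp (t * (lam + n * m)))
            ≤ ENNReal.ofReal (Real.exp (t * S ω))} := by
      intro ω hω
      have h1 : lam + n * m ≤ S ω := by
        have := hω; simp only [Set.mem_setOf_eq, ge_iff_le] at this; linarith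
      exact ENNReal.ofReal_le_ofReal (Real.exp_le_exp.mpr
        (mul_le_mul_of_nonneg_left h1 ht0.le))
    calc ENNReal.ofReal (Real.exp (t * (lam + n * m))) * μ {ω | S ω - n * m ≥ lam}
        ≤ ENNReal.ofReal (Real.exp (t * (lam + n * m)))
            * μ {ω | ENNReal.ofReal (Real.exp (t * (lam + n * m)))
                ≤ ENNReal.ofReal (Real.exp (t * S ω))} :=
          mul_le_mul_right (measure_mono hsub) _
      _ ≤ ∫⁻ ω, ENNReal.ofReal (Real.exp (t * S ω)) ∂μ :=
          mul_meas_ge_le_lintegral₀ hfmeas.aemeasurable _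
      _ = ENNReal.ofReal (Real.exp ((n : ℝ) * (φ - 1))) := hA
      _ = ENNReal.ofReal (Real.exp (t * (lam + n * m)))
            * ENNReal.ofReal (Real.exp ((n : ℝ) * (φ - 1) - t * (lam + n * m))) := by
          rw [← ENNReal.ofReal_mul (Real.exp_nonneg _), ← Real.exp_add]
          congr 2
          ring
  -- exponent comparison
  have hexp : (n : ℝ) * (φ - 1) - t * (lam + n * m) ≤ -(lam ^ 2 / 2) / K := by
    have h30 : (1 : ℝ) ≤ (Real.exp 1 * 30) ^ 2 := by nlinarith
    have h2b : 2 * b ≤ v := by nlinarith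
    have hnb : 2 * ((n : ℝ) * b) * t ≤ lam := by
      have : 2 * ((n : ℝ) * b) ≤ K := by
        have h1 : (n : ℝ) * (2 * b) ≤ (n : ℝ) * v :=
          mul_le_mul_of_nonneg_left h2b (Nat.cast_nonneg n)
        have h2 : 0 < D * lam := mul_pos hD0 hlam
        rw [hKdef]; nlinarith
      calc 2 * ((n : ℝ) * b) * t ≤ K * t :=
            mul_le_mul_of_nonneg_right this ht0.le
        _ = lam := by rw [mul_comm]; exact htK
    have hkey : (n : ℝ) * (φ - 1) ≤ (n : ℝ) * (t * m) + t * lam / 2 := by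
      have h1 : φ - 1 ≤ t * m + t ^ 2 * b := by linarith
      have h2 : (n : ℝ) * (φ - 1) ≤ (n : ℝ) * (t * m + t ^ 2 * b) :=
        mul_le_mul_of_nonneg_left h1 (Nat.cast_nonneg n)
      have h4 := mul_le_mul_of_nonneg_right hnb (le_of_lt ht0)
      have heq : (n : ℝ) * (t ^ 2 * b) = 2 * ((n : ℝ) * b) * t * t / 2 := by
        ring
      have h3 : (n : ℝ) * (t ^ 2 * b) ≤ t * lam / 2 := by
        rw [heq]; linarith
      have heq2 : (n : ℝ) * (t * m + t ^ 2 * b)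
          = (n : ℝ) * (t * m) + (n : ℝ) * (t ^ 2 * b) := by ring
      rw [heq2] at h2
      linarith
    have htlam : t * lam = lam ^ 2 / K := by
      rw [htdef]; ring
    have hgoal : -(t * lam) / 2 = -(lam ^ 2 / 2) / K := by
      rw [htlam]; ring
    linarith [hkey, hgoal.ge, hgoal.le]
  have hsetrw : {ω | (∑ i ∈ Finset.range (N ω), Y i ω) - n * m ≥ lam}
      = {ω | S ω - n * m ≥ lam} := by rw [hSdef]
  rw [hsetrw]
  calc μ {ω | S ω - n * m ≥ lam}
      ≤ ENNReal.ofReal (Real.exp ((n : ℝ) * (φ - 1) - t * (lam + n * m))) :=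
        hchern
    _ ≤ ENNReal.ofReal (Real.exp (-(lam ^ 2 / 2) / (n * v + D * lam))) := by
        exact ENNReal.ofReal_le_ofReal (Real.exp_le_exp.mpr (by rw [← hKdef]; exact hexp))
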